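/- Let G be a finite tree (a finite connected acyclic simple graph). Then the following are equivalent: (1) for every function ε : V(G) → {+, −}, every connected component of the ε-subgraph G_ε is isomorphic to a simply laced Dynkin graph (of type A_n, D_n, E_6, E_7, or E_8); (2) G itself is isomorphic to a simply laced Dynkin graph. -/

import Mathlib

/-- The ε-subgraph of `G`: the spanning subgraph whose edges are the edges of `G`
whose two endpoints receive different values under `ε`. -/
def epsSubgraph {V : Type*} (G : SimpleGraph V) (ε : V → Bool) : SimpleGraph V where
  Adj u v := G.Adj u v ∧ ε u ≠ ε v
  symm := ⟨fun _ _ h => ⟨h.1.symm, h.2.symm⟩⟩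
  loopless := ⟨fun v h => G.loopless.irrefl v h.1⟩

/-- The Dynkin graph `D_n` (for `n ≥ 4`): a path on `n - 1` vertices `0, 1, …, n-2`
together with one extra leaf `n-1` attached to the second vertex `1` of the path. -/
def dynkinD (n : ℕ) : SimpleGraph (Fin n) :=
  SimpleGraph.fromRel (fun i j =>
    (i.val + 1 = j.val ∧ j.val ≤ n - 2) ∨ (i.val = 1 ∧ j.val = n - 1))

/-- The Dynkin graph `E_n` (for `n = 6, 7, 8`): a path on `n - 1` vertices
`0, 1, …, n-2` together with one extra leaf `n-1` attached to the third vertex `2`. -/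
def dynkinE (n : ℕ) : SimpleGraph (Fin n) :=
  SimpleGraph.fromRel (fun i j =>
    (i.val + 1 = j.val ∧ j.val ≤ n - 2) ∨ (i.val = 2 ∧ j.val = n - 1))

/-- A graph is a simply laced Dynkin graph if it is isomorphic to `A_n` (`n ≥ 1`),
`D_n` (`n ≥ 4`), `E_6`, `E_7` or `E_8`. -/
def IsDynkin {W : Type*} (H : SimpleGraph W) : Prop :=
  (∃ n : ℕ, 1 ≤ n ∧ Nonempty (H ≃g SimpleGraph.pathGraph n)) ∨
  (∃ n : ℕ, 4 ≤ n ∧ Nonempty (H ≃g dynkinD n)) ∨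
  Nonempty (H ≃g dynkinE 6) ∨ Nonempty (H ≃g dynkinE 7) ∨ Nonempty (H ≃g dynkinE 8)


set_option maxHeartbeats 1600000

lemma dynkinD_adj {n : ℕ} (hn : 4 ≤ n) {u v : Fin n} :
    (dynkinD n).Adj u v ↔ ((u.val + 1 = v.val ∧ v.val ≤ n - 2) ∨
      (v.val + 1 = u.val ∧ u.val ≤ n - 2) ∨
      (u.val = 1 ∧ v.val = n - 1) ∨ (v.val = 1 ∧ u.val = n - 1)) := by
  have := u.isLt; have := v.isLt
  rw [dynkinD, SimpleGraph.fromRel_adj, ne_eq, ← Fin.val_eq_val]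
  constructor
  · rintro ⟨h, h'⟩; omega
  · intro h; omega

lemma dynkinE_adj {n : ℕ} (hn : 5 ≤ n) {u v : Fin n} :
    (dynkinE n).Adj u v ↔ ((u.val + 1 = v.val ∧ v.val ≤ n - 2) ∨
      (v.val + 1 = u.val ∧ u.val ≤ n - 2) ∨
      (u.val = 2 ∧ v.val = n - 1) ∨ (v.val = 2 ∧ u.val = n - 1)) := by
  have := u.isLt; have := v.isLt
  rw [dynkinE, SimpleGraph.fromRel_adj, ne_eq, ← Fin.val_eq_val]
  constructor
  · rintro ⟨h, h'⟩; omega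
  · intro h; omega

lemma IsDynkin.of_iso {W W' : Type*} {H : SimpleGraph W} {H' : SimpleGraph W'}
    (e : H ≃g H') (h : IsDynkin H') : IsDynkin H := by
  rcases h with ⟨n, hn, hf⟩ | ⟨n, hn, hf⟩ | hf | hf | hf <;> obtain ⟨f⟩ := hf
  · exact Or.inl ⟨n, hn, ⟨e.trans f⟩⟩
  · exact Or.inr (Or.inl ⟨n, hn, ⟨e.trans f⟩⟩)
  · exact Or.inr (Or.inr (Or.inl ⟨e.trans f⟩))
  · exact Or.inr (Or.inr (Or.inr (Or.inl ⟨e.trans f⟩)))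
  · exact Or.inr (Or.inr (Or.inr (Or.inr ⟨e.trans f⟩)))

-- discrete IVT for walks
lemma walk_ivt {W : Type*} {G : SimpleGraph W} (f : W → ℕ)
    (hf : ∀ {u v : W}, G.Adj u v → f v ≤ f u + 1) {c : ℕ} :
    ∀ {u v : W} (w : G.Walk u v), f u ≤ c → c ≤ f v → ∃ x ∈ w.support, f x = c := by
  intro u v w
  induction w with
  | nil => exact fun hc1 hc2 => ⟨_, by simp, le_antisymm hc1 hc2⟩
  | @cons a b d h p ih =>
    intro hc1 hc2
    rcases eq_or_lt_of_le hc1 with h1 | h1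
    · exact ⟨a, by simp, h1⟩
    · obtain ⟨x, hx, hx'⟩ := ih (by have := hf h; omega) hc2
      exact ⟨x, by simp [hx], hx'⟩

-- iso on induced subgraphs from iso
lemma iso_induce_image {W W' : Type*} {H : SimpleGraph W} {H' : SimpleGraph W'}
    (e : H ≃g H') (S : Set W) : Nonempty (H.induce S ≃g H'.induce (e '' S)) := by
  refine ⟨RelIso.mk (e.toEquiv.image S) (fun {a b} => ?_)⟩
  exact e.map_rel_iff


-- helper: induce iso from enumeration
lemma induce_iso_of_enum {W : Type*} (G : SimpleGraph W) (S : Set W) {m : ℕ}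
    (D : SimpleGraph (Fin m)) (φ : Fin m → W) (hinj : Function.Injective φ)
    (hS : ∀ x, x ∈ S ↔ ∃ i, φ i = x)
    (hadj : ∀ i j, G.Adj (φ i) (φ j) ↔ D.Adj i j) :
    Nonempty (G.induce S ≃g D) := by
  have hφ : ∀ i, φ i ∈ S := fun i => (hS _).2 ⟨i, rfl⟩
  have hbij : Function.Bijective (fun i : Fin m => (⟨φ i, hφ i⟩ : S)) := by
    constructor
    · intro i j h
      exact hinj (congrArg Subtype.val h)
    · rintro ⟨x, hx⟩
      obtain ⟨i, hi⟩ := (hS x).1 hx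
      exact ⟨i, Subtype.ext hi⟩
  exact ⟨(RelIso.mk (Equiv.ofBijective _ hbij) (fun {i j} => (hadj i j))).symm⟩

lemma interval_of_connected {n : ℕ} {G : SimpleGraph (Fin n)} {S : Set (Fin n)} (f : Fin n → ℕ)
    (hf : ∀ u v : Fin n, G.Adj u v → f v ≤ f u + 1)
    (hconn : (G.induce S).Connected)
    {x y : Fin n} (hx : x ∈ S) (hy : y ∈ S) {c : ℕ} (h1 : f x ≤ c) (h2 : c ≤ f y) :
    ∃ z ∈ S, f z = c := by
  obtain ⟨w⟩ := hconn.preconnected ⟨x, hx⟩ ⟨y, hy⟩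
  obtain ⟨z, _, hz⟩ := walk_ivt (G := G.induce S) (fun u => f u.val)
    (fun {u v} h => hf _ _ h) w h1 h2
  exact ⟨z.val, z.2, hz⟩

/-- a nonempty connected induced subgraph contains the distinguished neighbor of
any of its vertices all of whose `G`-neighbors equal `j`, provided it has
another vertex. -/
lemma leaf_neighbor_mem {W : Type*} {G : SimpleGraph W} {S : Set W} {l y j : W}
    (hconn : (G.induce S).Connected) (hl : l ∈ S) (hy : y ∈ S) (hne : y ≠ l)
    (hj : ∀ z, G.Adj l z → z = j) : j ∈ S := by
  obtain ⟨w⟩ := hconn.preconnected ⟨l, hl⟩ ⟨y, hy⟩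
  have hnil : ¬ w.Nil := SimpleGraph.Walk.not_nil_of_ne (by simp [Subtype.ext_iff]; exact fun h => (hne h.symm).elim)
  obtain ⟨u, h, q, _⟩ := SimpleGraph.Walk.not_nil_iff.mp hnil
  have : G.Adj l u.val := h
  have := hj _ this
  exact this ▸ u.2

lemma famA {n : ℕ} (S : Set (Fin n)) (hne : S.Nonempty)
    (hconn : ((SimpleGraph.pathGraph n).induce S).Connected) :
    IsDynkin ((SimpleGraph.pathGraph n).induce S) := by
  classical
  obtain ⟨x0, hx0⟩ := hne
  set T : Finset (Fin n) := (Set.toFinite S).toFinset with hT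
  have hmemT : ∀ x, x ∈ T ↔ x ∈ S := fun x => Set.Finite.mem_toFinset _
  have hTne : T.Nonempty := ⟨x0, (hmemT _).2 hx0⟩
  set a := T.min' hTne with haDef
  set b := T.max' hTne with hbDef
  have ha : a ∈ S := (hmemT _).1 (T.min'_mem hTne)
  have hb : b ∈ S := (hmemT _).1 (T.max'_mem hTne)
  have hbound : ∀ x, x ∈ S → a.val ≤ x.val ∧ x.val ≤ b.val := by
    intro x hx
    exact ⟨T.min'_le x ((hmemT _).2 hx), T.le_max' x ((hmemT _).2 hx)⟩
  have hstep : ∀ u v : Fin n, (SimpleGraph.pathGraph n).Adj u v → v.val ≤ u.val + 1 := by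
    intro u v h
    rw [SimpleGraph.pathGraph_adj] at h
    omega
  have hint : ∀ x : Fin n, x ∈ S ↔ a.val ≤ x.val ∧ x.val ≤ b.val := by
    intro x
    refine ⟨hbound x, fun ⟨h1, h2⟩ => ?_⟩
    obtain ⟨z, hz, hz'⟩ := interval_of_connected Fin.val hstep hconn ha hb h1 h2
    rwa [show x = z from Fin.ext hz'.symm]
  have hbn : b.val < n := b.isLt
  obtain ⟨e⟩ := induce_iso_of_enum (SimpleGraph.pathGraph n) S
    (SimpleGraph.pathGraph (b.val + 1 - a.val))
    (fun i => ⟨a.val + i.val, by have := i.isLt; omega⟩)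
    (by intro i j h; apply Fin.ext; have := congrArg Fin.val h; simp only [] at this; omega)
    (by
      intro x
      rw [hint x]
      constructor
      · intro ⟨h1, h2⟩
        exact ⟨⟨x.val - a.val, by omega⟩, by apply Fin.ext; simp; omega⟩
      · rintro ⟨i, rfl⟩
        have := i.isLt; simp; omega)
    (by
      intro i j
      have := i.isLt; have := j.isLt
      rw [SimpleGraph.pathGraph_adj, SimpleGraph.pathGraph_adj]
      dsimp only
      omega)
  exact Or.inl ⟨b.val + 1 - a.val, by have := hbound a ha; omega, ⟨e⟩⟩
section Helpers

variable {n : ℕ} (G : SimpleGraph (Fin n)) (S : Set (Fin n))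

lemma singleton_case {W : Type*} (G : SimpleGraph W) (S : Set W) (x : W)
    (hS : ∀ y, y ∈ S ↔ y = x) : IsDynkin (G.induce S) := by
  obtain ⟨e⟩ := induce_iso_of_enum G S (SimpleGraph.pathGraph 1) (fun _ => x)
    (fun i j _ => Subsingleton.elim i j)
    (fun y => by
      rw [hS y]
      exact ⟨fun h => ⟨0, h.symm⟩, fun ⟨i, h⟩ => h.symm⟩)
    (by
      intro i j
      constructor
      · intro h; exact absurd h (G.loopless.irrefl x)
      · intro h; exact absurd h ((SimpleGraph.pathGraph 1).loopless.irrefl _ (Subsingleton.elim i j ▸ h)).elim)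
  exact Or.inl ⟨1, le_refl 1, ⟨e⟩⟩

lemma path_case (a b : ℕ) (hab : a ≤ b) (hbn : b < n)
    (hmem : ∀ x : Fin n, x ∈ S ↔ (a ≤ x.val ∧ x.val ≤ b))
    (hadj : ∀ x y : Fin n, x ∈ S → y ∈ S →
      (G.Adj x y ↔ (x.val + 1 = y.val ∨ y.val + 1 = x.val))) :
    IsDynkin (G.induce S) := by
  have hmemφ : ∀ i : Fin (b + 1 - a), (⟨a + i.val, by have := i.isLt; omega⟩ : Fin n) ∈ S := by
    intro i; rw [hmem]; have := i.isLt; dsimp only; omega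
  obtain ⟨e⟩ := induce_iso_of_enum G S (SimpleGraph.pathGraph (b + 1 - a))
    (fun i => ⟨a + i.val, by have := i.isLt; omega⟩)
    (by intro i j h; have h' := congrArg Fin.val h; dsimp only at h'; exact Fin.ext (by omega))
    (by
      intro x
      rw [hmem]
      constructor
      · intro ⟨h1, h2⟩
        exact ⟨⟨x.val - a, by omega⟩, by apply Fin.ext; dsimp only; omega⟩
      · rintro ⟨i, rfl⟩
        have := i.isLt; dsimp only; omega)
    (by
      intro i j
      rw [hadj _ _ (hmemφ i) (hmemφ j), SimpleGraph.pathGraph_adj]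
      have := i.isLt; have := j.isLt
      dsimp only
      omega)
  exact Or.inl ⟨b + 1 - a, by omega, ⟨e⟩⟩

variable (a b ln t e p q : ℕ) (hab : a ≤ b) (hbe : b ≤ e) (heln : e < ln) (hln : ln < n)
    (hGadj : ∀ x y : Fin n, G.Adj x y ↔ ((x.val + 1 = y.val ∧ y.val ≤ e) ∨
      (y.val + 1 = x.val ∧ x.val ≤ e) ∨
      (x.val = t ∧ y.val = ln) ∨ (y.val = t ∧ x.val = ln)))
    (hmem : ∀ x : Fin n, x ∈ S ↔ ((a ≤ x.val ∧ x.val ≤ b) ∨ x.val = ln))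

include hab hbe heln hln hGadj hmem in
lemma leaf_path_case (hvar : (p = a ∧ q = b ∧ t = b) ∨ (p = b ∧ q = a ∧ t = a)) :
    IsDynkin (G.induce S) := by
  obtain ⟨e'⟩ := induce_iso_of_enum G S (SimpleGraph.pathGraph (b + 2 - a))
    (fun i => ⟨if i.val = b + 1 - a then ln else if p ≤ q then p + i.val else p - i.val,
      by have := i.isLt; rcases hvar with ⟨rfl, rfl, rfl⟩ | ⟨rfl, rfl, rfl⟩ <;>
        split_ifs <;> omega⟩)
    (by
      intro i j h
      have h' := congrArg Fin.val h
      have := i.isLt; have := j.isLt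
      dsimp only at h'
      apply Fin.ext
      rcases hvar with ⟨rfl, rfl, rfl⟩ | ⟨rfl, rfl, rfl⟩ <;> split_ifs at h' <;> omega)
    (by
      intro x
      rw [hmem]
      constructor
      · intro hx
        rcases hx with ⟨h1, h2⟩ | h1
        · refine ⟨⟨if p ≤ q then x.val - p else p - x.val,
            by rcases hvar with ⟨rfl, rfl, rfl⟩ | ⟨rfl, rfl, rfl⟩ <;> split_ifs <;> omega⟩, ?_⟩
          apply Fin.ext
          dsimp only
          rcases hvar with ⟨rfl, rfl, rfl⟩ | ⟨rfl, rfl, rfl⟩ <;> split_ifs <;> omega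
        · refine ⟨⟨b + 1 - a, by omega⟩, ?_⟩
          apply Fin.ext
          dsimp only
          rcases hvar with ⟨rfl, rfl, rfl⟩ | ⟨rfl, rfl, rfl⟩ <;> split_ifs <;> omega
      · rintro ⟨i, rfl⟩
        have := i.isLt
        dsimp only
        rcases hvar with ⟨rfl, rfl, rfl⟩ | ⟨rfl, rfl, rfl⟩ <;> split_ifs <;> omega)
    (by
      intro i j
      rw [hGadj, SimpleGraph.pathGraph_adj]
      have := i.isLt; have := j.isLt
      dsimp only
      rcases hvar with ⟨rfl, rfl, rfl⟩ | ⟨rfl, rfl, rfl⟩ <;> split_ifs <;>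
        omega)
  exact Or.inl ⟨b + 2 - a, by omega, ⟨e'⟩⟩

include hab hbe heln hln hGadj hmem in
lemma leaf_D_case (hab2 : a + 2 ≤ b)
    (hvar : (p = a ∧ q = b ∧ t = a + 1) ∨ (p = b ∧ q = a ∧ t = b - 1)) :
    IsDynkin (G.induce S) := by
  have hm : 4 ≤ b + 2 - a := by omega
  obtain ⟨e'⟩ := induce_iso_of_enum G S (dynkinD (b + 2 - a))
    (fun i => ⟨if i.val = b + 1 - a then ln else if p ≤ q then p + i.val else p - i.val,
      by have := i.isLt; rcases hvar with ⟨rfl, rfl, rfl⟩ | ⟨rfl, rfl, rfl⟩ <;>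
        split_ifs <;> omega⟩)
    (by
      intro i j h
      have h' := congrArg Fin.val h
      have := i.isLt; have := j.isLt
      dsimp only at h'
      apply Fin.ext
      rcases hvar with ⟨rfl, rfl, rfl⟩ | ⟨rfl, rfl, rfl⟩ <;> split_ifs at h' <;> omega)
    (by
      intro x
      rw [hmem]
      constructor
      · intro hx
        rcases hx with ⟨h1, h2⟩ | h1
        · refine ⟨⟨if p ≤ q then x.val - p else p - x.val,
            by rcases hvar with ⟨rfl, rfl, rfl⟩ | ⟨rfl, rfl, rfl⟩ <;> split_ifs <;> omega⟩, ?_⟩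
          apply Fin.ext
          dsimp only
          rcases hvar with ⟨rfl, rfl, rfl⟩ | ⟨rfl, rfl, rfl⟩ <;> split_ifs <;> omega
        · refine ⟨⟨b + 1 - a, by omega⟩, ?_⟩
          apply Fin.ext
          dsimp only
          rcases hvar with ⟨rfl, rfl, rfl⟩ | ⟨rfl, rfl, rfl⟩ <;> split_ifs <;> omega
      · rintro ⟨i, rfl⟩
        have := i.isLt
        dsimp only
        rcases hvar with ⟨rfl, rfl, rfl⟩ | ⟨rfl, rfl, rfl⟩ <;> split_ifs <;> omega)
    (by
      intro i j
      rw [hGadj, dynkinD_adj hm]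
      have := i.isLt; have := j.isLt
      dsimp only
      rcases hvar with ⟨rfl, rfl, rfl⟩ | ⟨rfl, rfl, rfl⟩ <;> split_ifs <;>
        omega)
  exact Or.inr (Or.inl ⟨b + 2 - a, hm, ⟨e'⟩⟩)

include hab hbe heln hln hGadj hmem in
lemma leaf_E_case (hab4 : a + 4 ≤ b) (hm8 : b + 2 - a ≤ 8) (ht : t = a + 2) :
    IsDynkin (G.induce S) := by
  subst ht
  have hm : 5 ≤ b + 2 - a := by omega
  have key : Nonempty (G.induce S ≃g dynkinE (b + 2 - a)) := by
    apply induce_iso_of_enum G S (dynkinE (b + 2 - a))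
      (fun i => ⟨if i.val = b + 1 - a then ln else a + i.val,
        by have := i.isLt; split_ifs <;> omega⟩)
      (by
        intro i j h
        have h' := congrArg Fin.val h
        have := i.isLt; have := j.isLt
        dsimp only at h'
        apply Fin.ext
        split_ifs at h' <;> omega)
      (by
        intro x
        rw [hmem]
        constructor
        · intro hx
          rcases hx with ⟨h1, h2⟩ | h1
          · refine ⟨⟨x.val - a, by omega⟩, ?_⟩
            apply Fin.ext
            dsimp only
            split_ifs <;> omega
          · refine ⟨⟨b + 1 - a, by omega⟩, ?_⟩
            apply Fin.ext
            dsimp only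
            split_ifs <;> omega
        · rintro ⟨i, rfl⟩
          have := i.isLt
          dsimp only
          split_ifs <;> omega)
      (by
        intro i j
        rw [hGadj, dynkinE_adj hm]
        have := i.isLt; have := j.isLt
        dsimp only
        split_ifs <;> omega)
  have : b + 2 - a = 6 ∨ b + 2 - a = 7 ∨ b + 2 - a = 8 := by omega
  rcases this with h | h | h <;> rw [h] at key
  · exact Or.inr (Or.inr (Or.inl key))
  · exact Or.inr (Or.inr (Or.inr (Or.inl key)))
  · exact Or.inr (Or.inr (Or.inr (Or.inr key)))

end Helpers

lemma branched_main {n : ℕ} (G : SimpleGraph (Fin n)) (e t ln : ℕ)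
    (hnn : n = ln + 1) (hlne : ln = e + 1) (ht1 : 1 ≤ t) (hte : t ≤ e)
    (ht12 : t = 1 ∨ (t = 2 ∧ e ≤ 6))
    (hGadj : ∀ x y : Fin n, G.Adj x y ↔ ((x.val + 1 = y.val ∧ y.val ≤ e) ∨
      (y.val + 1 = x.val ∧ x.val ≤ e) ∨
      (x.val = t ∧ y.val = ln) ∨ (y.val = t ∧ x.val = ln)))
    (S : Set (Fin n)) (hne : S.Nonempty) (hconn : (G.induce S).Connected) :
    IsDynkin (G.induce S) := by
  classical
  have hlnn : ln < n := by omega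
  set l : Fin n := ⟨ln, hlnn⟩ with hl_def
  set f : Fin n → ℕ := fun x => if x.val = ln then t else x.val with hf_def
  have hstep : ∀ u v : Fin n, G.Adj u v → f v ≤ f u + 1 := by
    intro u v h
    rw [hGadj] at h
    have := u.isLt; have := v.isLt
    simp only [hf_def]
    split_ifs <;> omega
  have hvalle : ∀ x : Fin n, x ≠ l → x.val ≤ e := by
    intro x hx
    have h1 := x.isLt
    have h2 : x.val ≠ ln := fun h => hx (Fin.ext h)
    omega
  by_cases hl : l ∈ S
  case neg =>
    obtain ⟨x0, hx0⟩ := hne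
    set T : Finset (Fin n) := (Set.toFinite S).toFinset with hT
    have hmemT : ∀ x, x ∈ T ↔ x ∈ S := fun x => Set.Finite.mem_toFinset _
    have hTne : T.Nonempty := ⟨x0, (hmemT _).2 hx0⟩
    set A := T.min' hTne
    set B := T.max' hTne
    have hA : A ∈ S := (hmemT _).1 (T.min'_mem hTne)
    have hB : B ∈ S := (hmemT _).1 (T.max'_mem hTne)
    have hbound : ∀ x, x ∈ S → A.val ≤ x.val ∧ x.val ≤ B.val := fun x hx =>
      ⟨T.min'_le x ((hmemT _).2 hx), T.le_max' x ((hmemT _).2 hx)⟩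
    have hSe : ∀ x, x ∈ S → x.val ≤ e := fun x hx => hvalle x (fun h => hl (h ▸ hx))
    have hint : ∀ x : Fin n, x ∈ S ↔ A.val ≤ x.val ∧ x.val ≤ B.val := by
      intro x
      refine ⟨hbound x, fun ⟨h1, h2⟩ => ?_⟩
      have hxe : x.val ≤ e := le_trans h2 (hSe B hB)
      have hfa : f A = A.val := by simp only [hf_def]; rw [if_neg]; have := hSe A hA; omega
      have hfb : f B = B.val := by simp only [hf_def]; rw [if_neg]; have := hSe B hB; omega
      obtain ⟨z, hz, hz'⟩ := interval_of_connected f hstep hconn hA hB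
        (c := x.val) (by omega) (by omega)
      have hze := hSe z hz
      have hzx : z.val = x.val := by simp only [hf_def] at hz'; split_ifs at hz' <;> omega
      rwa [show x = z from Fin.ext hzx.symm]
    exact path_case G S A.val B.val (hbound B hB).1 B.isLt hint
      (by
        intro x y hx hy
        rw [hGadj]
        have := hSe x hx; have := hSe y hy
        omega)
  case pos =>
    by_cases hsing : ∀ y ∈ S, y = l
    · exact singleton_case G S l (fun y => ⟨fun h => hsing y h, fun h => h ▸ hl⟩)
    · push_neg at hsing
      obtain ⟨y0, hy0, hy0l⟩ := hsing
      have hvtn : t < n := by omega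
      have hvt : (⟨t, hvtn⟩ : Fin n) ∈ S := by
        apply leaf_neighbor_mem hconn hl hy0 hy0l
        intro z hz
        rw [hGadj] at hz
        have := z.isLt
        apply Fin.ext
        simp only [hl_def] at hz ⊢
        omega
      set S' : Set (Fin n) := S \ {l} with hS'_def
      have hvtl : (⟨t, hvtn⟩ : Fin n) ≠ l := by
        intro h; have := congrArg Fin.val h; simp only [hl_def] at this; omega
      have hvt' : (⟨t, hvtn⟩ : Fin n) ∈ S' := ⟨hvt, hvtl⟩
      set T : Finset (Fin n) := (Set.toFinite S').toFinset with hT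
      have hmemT : ∀ x, x ∈ T ↔ x ∈ S' := fun x => Set.Finite.mem_toFinset _
      have hTne : T.Nonempty := ⟨_, (hmemT _).2 hvt'⟩
      set A := T.min' hTne
      set B := T.max' hTne
      have hA' : A ∈ S' := (hmemT _).1 (T.min'_mem hTne)
      have hB' : B ∈ S' := (hmemT _).1 (T.max'_mem hTne)
      have hA : A ∈ S := hA'.1
      have hB : B ∈ S := hB'.1
      have hbound : ∀ x, x ∈ S' → A.val ≤ x.val ∧ x.val ≤ B.val := fun x hx =>
        ⟨T.min'_le x ((hmemT _).2 hx), T.le_max' x ((hmemT _).2 hx)⟩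
      have hS'e : ∀ x, x ∈ S' → x.val ≤ e := fun x hx => hvalle x hx.2
      have hAe : A.val ≤ e := hS'e A hA'
      have hBe : B.val ≤ e := hS'e B hB'
      have hAt : A.val ≤ t := (hbound _ hvt').1
      have hBt : t ≤ B.val := (hbound _ hvt').2
      have hint : ∀ x : Fin n, x ∈ S' ↔ A.val ≤ x.val ∧ x.val ≤ B.val := by
        intro x
        refine ⟨hbound x, fun ⟨h1, h2⟩ => ?_⟩
        have hxe : x.val ≤ e := le_trans h2 hBe
        have hfa : f A = A.val := by simp only [hf_def]; rw [if_neg]; omega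
        have hfb : f B = B.val := by simp only [hf_def]; rw [if_neg]; omega
        obtain ⟨z, hz, hz'⟩ := interval_of_connected f hstep hconn hA hB
          (c := x.val) (by omega) (by omega)
        by_cases hzl : z = l
        · subst hzl
          have : f l = t := by simp only [hf_def, hl_def, if_pos rfl]
          have hxt : x.val = t := by omega
          have : x = (⟨t, hvtn⟩ : Fin n) := Fin.ext hxt
          rw [this]; exact hvt'
        · have := hvalle z hzl
          have hzx : z.val = x.val := by
            simp only [hf_def] at hz'; split_ifs at hz' <;> omega
          have : x = z := Fin.ext hzx.symm
          rw [this]; exact ⟨hz, hzl⟩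
      have hmemS : ∀ x : Fin n, x ∈ S ↔ ((A.val ≤ x.val ∧ x.val ≤ B.val) ∨ x.val = ln) := by
        intro x
        constructor
        · intro hx
          by_cases hxl : x = l
          · right; rw [hxl]
          · exact Or.inl ((hint x).1 ⟨hx, hxl⟩)
        · rintro (h | h)
          · exact ((hint x).2 h).1
          · rw [show x = l from Fin.ext h]; exact hl
      have heln : e < ln := by omega
      by_cases hc1 : t = A.val
      · exact leaf_path_case G S A.val B.val ln t e B.val A.val (by omega) hBe heln hlnn
          hGadj hmemS (Or.inr ⟨rfl, rfl, hc1⟩)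
      by_cases hc2 : t = B.val
      · exact leaf_path_case G S A.val B.val ln t e A.val B.val (by omega) hBe heln hlnn
          hGadj hmemS (Or.inl ⟨rfl, rfl, hc2⟩)
      rcases ht12 with rfl | ⟨rfl, he6⟩
      · exact leaf_D_case G S A.val B.val ln 1 e A.val B.val (by omega) hBe heln hlnn
          hGadj hmemS (by omega) (Or.inl ⟨rfl, rfl, by omega⟩)
      · by_cases hA1 : A.val = 1
        · exact leaf_D_case G S A.val B.val ln 2 e A.val B.val (by omega) hBe heln hlnn
            hGadj hmemS (by omega) (Or.inl ⟨rfl, rfl, by omega⟩)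
        · by_cases hB3 : B.val = 3
          · exact leaf_D_case G S A.val B.val ln 2 e B.val A.val (by omega) hBe heln hlnn
              hGadj hmemS (by omega) (Or.inr ⟨rfl, rfl, by omega⟩)
          · exact leaf_E_case G S A.val B.val ln 2 e (by omega) hBe heln hlnn
              hGadj hmemS (by omega) (by omega) (by omega)

lemma famD {n : ℕ} (hn : 4 ≤ n) (S : Set (Fin n)) (hne : S.Nonempty)
    (hconn : ((dynkinD n).induce S).Connected) : IsDynkin ((dynkinD n).induce S) :=
  branched_main (dynkinD n) (n - 2) 1 (n - 1) (by omega) (by omega) le_rfl (by omega)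
    (Or.inl rfl) (fun x y => dynkinD_adj hn) S hne hconn

lemma famE {n : ℕ} (hn : 6 ≤ n) (hn8 : n ≤ 8) (S : Set (Fin n)) (hne : S.Nonempty)
    (hconn : ((dynkinE n).induce S).Connected) : IsDynkin ((dynkinE n).induce S) :=
  branched_main (dynkinE n) (n - 2) 2 (n - 1) (by omega) (by omega) (by omega) (by omega)
    (Or.inr ⟨rfl, by omega⟩) (fun x y => dynkinE_adj (by omega)) S hne hconn

lemma isDynkin_induce {W : Type*} {H : SimpleGraph W} (h : IsDynkin H) (S : Set W)
    (hne : S.Nonempty) (hconn : (H.induce S).Connected) : IsDynkin (H.induce S) := by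
  rcases h with ⟨m, hm, hf⟩ | ⟨m, hm, hf⟩ | hf | hf | hf <;> obtain ⟨f⟩ := hf <;>
    obtain ⟨g⟩ := iso_induce_image f S
  · exact IsDynkin.of_iso g (famA _ (hne.image f) ((SimpleGraph.Iso.connected_iff g).1 hconn))
  · exact IsDynkin.of_iso g (famD hm _ (hne.image f) ((SimpleGraph.Iso.connected_iff g).1 hconn))
  · exact IsDynkin.of_iso g (famE (by norm_num) (by norm_num) _ (hne.image f)
      ((SimpleGraph.Iso.connected_iff g).1 hconn))
  · exact IsDynkin.of_iso g (famE (by norm_num) (by norm_num) _ (hne.image f)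
      ((SimpleGraph.Iso.connected_iff g).1 hconn))
  · exact IsDynkin.of_iso g (famE (by norm_num) (by norm_num) _ (hne.image f)
      ((SimpleGraph.Iso.connected_iff g).1 hconn))

lemma connected_induce_supp {V : Type*} {G : SimpleGraph V} (c : G.ConnectedComponent) :
    (G.induce c.supp).Connected := by
  classical
  obtain ⟨v, hv⟩ := c.exists_rep
  have hvmem : v ∈ c.supp := hv
  apply SimpleGraph.induce_connected_of_patches v hvmem
  intro w hw
  have hws : G.connectedComponentMk w = c := hw
  have hr : G.Reachable v w :=
    (SimpleGraph.ConnectedComponent.exact (hws.trans hv.symm)).symm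
  obtain ⟨p⟩ := hr
  refine ⟨{x | x ∈ p.support}, ?_, p.start_mem_support, p.end_mem_support, ?_⟩
  · intro x hx
    have hrx : G.Reachable v x := ⟨p.takeUntil x hx⟩
    rw [SimpleGraph.ConnectedComponent.mem_supp_iff, ← hv]
    exact SimpleGraph.ConnectedComponent.sound hrx.symm
  · exact (p.connected_induce_support).preconnected _ _

lemma eps_le {V : Type*} (G : SimpleGraph V) (ε : V → Bool) : epsSubgraph G ε ≤ G :=
  fun {u v} h => h.1

lemma eps_induce_eq {V : Type*} {G : SimpleGraph V} (hG : G.IsTree) (ε : V → Bool)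
    (c : (epsSubgraph G ε).ConnectedComponent) :
    (epsSubgraph G ε).induce c.supp = G.induce c.supp := by
  classical
  ext ⟨u, hu⟩ ⟨v, hv⟩
  show (epsSubgraph G ε).Adj u v ↔ G.Adj u v
  constructor
  · exact fun h => h.1
  · intro h
    refine ⟨h, fun hεeq => ?_⟩
    have hr : (epsSubgraph G ε).Reachable u v := by
      have h1 : (epsSubgraph G ε).connectedComponentMk u = c := hu
      have h2 : (epsSubgraph G ε).connectedComponentMk v = c := hv
      exact SimpleGraph.ConnectedComponent.exact (h1.trans h2.symm)
    obtain ⟨w⟩ := hr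
    set p := w.toPath with hp
    have hq : (SimpleGraph.Walk.mapLe (eps_le G ε) p.val).IsPath := p.prop.mapLe _
    have hsing : (SimpleGraph.Path.singleton h).val.IsPath := (SimpleGraph.Path.singleton h).prop
    have huv : SimpleGraph.Walk.mapLe (eps_le G ε) p.val = (SimpleGraph.Path.singleton h).val :=
      (hG.existsUnique_path u v).unique hq hsing
    have hedge : s(u, v) ∈ (SimpleGraph.Walk.mapLe (eps_le G ε) p.val).edges := by
      rw [huv]
      simp [SimpleGraph.Path.singleton]
    have hedge' : s(u, v) ∈ p.val.edges := by
      rw [SimpleGraph.Walk.mapLe, SimpleGraph.Walk.edges_map] at hedge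
      simpa using hedge
    have : (epsSubgraph G ε).Adj u v := (SimpleGraph.Walk.edges_subset_edgeSet _ hedge')
    exact this.2 hεeq

lemma tree_coloring {V : Type*} {G : SimpleGraph V} (hG : G.IsTree) :
    ∃ ε : V → Bool, ∀ {u v : V}, G.Adj u v → ε u ≠ ε v := by
  classical
  obtain ⟨r⟩ := hG.isConnected.nonempty
  choose f hf hf' using (hG.existsUnique_path r ·)
  refine ⟨fun v => decide ((f v).length % 2 = 1), ?_⟩
  intro u v huv heq
  classical
  rw [decide_eq_decide] at heq
  have hpar : (f v).length = (f u).length + 1 ∨ (f u).length = (f v).length + 1 := by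
    by_cases hv : v ∈ (f u).support
    · right
      have hdrop : ((f u).dropUntil v hv).IsPath := (hf u).dropUntil hv
      have htake : ((f u).takeUntil v hv).IsPath := (hf u).takeUntil hv
      have h1 : (f u).takeUntil v hv = f v := hf' v _ htake
      have h2 : (f u).dropUntil v hv = (SimpleGraph.Path.singleton huv.symm).val := by
        have := hG.IsAcyclic.path_unique ⟨(f u).dropUntil v hv, hdrop⟩
          (SimpleGraph.Path.singleton huv.symm)
        exact congrArg Subtype.val this
      have h3 := congrArg SimpleGraph.Walk.length ((f u).take_spec hv)
      rw [SimpleGraph.Walk.length_append, h1, h2] at h3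
      simp only [SimpleGraph.Path.singleton, SimpleGraph.Walk.length_cons,
        SimpleGraph.Walk.length_nil] at h3
      omega
    · left
      have hcat : ((f u).concat huv).IsPath := by
        rw [← SimpleGraph.Walk.isPath_reverse_iff, SimpleGraph.Walk.reverse_concat,
          SimpleGraph.Walk.cons_isPath_iff]
        refine ⟨(hf u).reverse, ?_⟩
        rw [SimpleGraph.Walk.support_reverse]
        simpa using hv
      have h1 : (f u).concat huv = f v := hf' v _ hcat
      have := congrArg SimpleGraph.Walk.length h1
      rw [SimpleGraph.Walk.length_concat] at this
      omega
  omega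

theorem stmt3 {V : Type*} [Fintype V] (G : SimpleGraph V) (hG : G.IsTree) :
    (∀ ε : V → Bool, ∀ c : (epsSubgraph G ε).ConnectedComponent,
      IsDynkin ((epsSubgraph G ε).induce c.supp)) ↔ IsDynkin G := by
  constructor
  · intro h
    obtain ⟨ε, hε⟩ := tree_coloring hG
    have heq : epsSubgraph G ε = G := by
      ext u v
      exact ⟨fun h => h.1, fun h => ⟨h, hε h⟩⟩
    have h2 := h ε
    rw [heq] at h2
    obtain ⟨r⟩ := hG.isConnected.nonempty
    have h3 := h2 (G.connectedComponentMk r)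
    have hsupp : (G.connectedComponentMk r).supp = Set.univ := by
      ext x
      simp only [SimpleGraph.ConnectedComponent.mem_supp_iff, Set.mem_univ, iff_true]
      exact SimpleGraph.ConnectedComponent.sound (hG.isConnected.preconnected x r)
    rw [hsupp] at h3
    exact IsDynkin.of_iso (SimpleGraph.induceUnivIso G).symm h3
  · intro h ε c
    have heq := eps_induce_eq hG ε c
    rw [heq]
    obtain ⟨v, hv⟩ := c.exists_rep
    apply isDynkin_induce h
    · exact ⟨v, hv⟩
    · rw [← heq]
      exact connected_induce_supp c
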